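/- Let R ⊂ ℝ² be the closed square with vertices (±1/√2, 0) and (0, ±1/√2), let χ_R be its characteristic function, g = χ_R * χ_R the self-convolution, and ĝ its Fourier transform (with convention ĝ(ξ) = ∫ g(x)e^{−2πi x·ξ}dx). Define f = ĝ − g. Then: (i) the Fourier transform of f is −f; (ii) f(0,0) = 0; and (iii) f(x, x̄) ≥ 0 for all (x, x̄) ∈ ℝ² with x² + x̄² ≥ 1 and x² − x̄² ∈ 2ℤ. -/

import Mathlib

open MeasureTheory Real

noncomputable section

/-- The closed square with vertices `(±1/√2, 0)` and `(0, ±1/√2)`. -/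
def Rsq : Set (EuclideanSpace ℝ (Fin 2)) :=
  {p | |p 0| + |p 1| ≤ 1 / Real.sqrt 2}

/-- The characteristic function of the square `Rsq`. -/
def chiR : EuclideanSpace ℝ (Fin 2) → ℂ := Set.indicator Rsq 1

/-- The self-convolution `g = χ_R * χ_R`. -/
def gfun (w : EuclideanSpace ℝ (Fin 2)) : ℂ := ∫ t, chiR t * chiR (w - t)

/-- `f = ĝ − g`. -/
def ffun : EuclideanSpace ℝ (Fin 2) → ℂ :=
  fun w => FourierTransform.fourier gfun w - gfun w

end

open FourierTransform RealInnerProductSpace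

noncomputable section Stmt11AuxSection
namespace Stmt11Aux

/-! ### 1-D objects -/

def hfn : ℝ → ℂ := Set.indicator (Set.Icc (-(1/2) : ℝ) (1/2)) 1

def g1 (u : ℝ) : ℝ := max (1 - |u|) 0
def g1c (u : ℝ) : ℂ := (g1 u : ℂ)
def Sfn (u : ℝ) : ℝ := if u = 0 then 1 else Real.sin (π * u) ^ 2 / (π * u) ^ 2
def Sc (u : ℝ) : ℂ := (Sfn u : ℂ)

lemma g1_nonneg (u : ℝ) : 0 ≤ g1 u := le_max_right _ _

lemma g1_even (u : ℝ) : g1 (-u) = g1 u := by simp [g1]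

lemma g1_eq_zero {u : ℝ} (hu : 1 ≤ |u|) : g1 u = 0 := by
  unfold g1; rw [max_eq_right]; linarith

lemma g1_zero : g1 0 = 1 := by simp [g1]

lemma g1_continuous : Continuous g1 :=
  (continuous_const.sub continuous_abs).max continuous_const

lemma g1c_continuous : Continuous g1c :=
  Complex.continuous_ofReal.comp g1_continuous

lemma g1c_support (u : ℝ) (hu : u ∉ Set.Icc (-1 : ℝ) 1) : g1c u = 0 := by
  have : 1 ≤ |u| := by
    simp only [Set.mem_Icc, not_and_or, not_le] at hu
    rcases hu with h | h
    · rw [abs_of_neg (by linarith)]; linarith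
    · rw [abs_of_pos (by linarith)]; linarith
  simp [g1c, g1_eq_zero this]

lemma g1c_integrable : Integrable g1c := by
  apply g1c_continuous.integrable_of_hasCompactSupport
  exact HasCompactSupport.intro isCompact_Icc g1c_support

lemma Sfn_nonneg (u : ℝ) : 0 ≤ Sfn u := by
  unfold Sfn
  split
  · norm_num
  · positivity

lemma Sfn_zero : Sfn 0 = 1 := by simp [Sfn]

lemma Sfn_le (u : ℝ) : Sfn u ≤ 2 * (1 + u ^ 2)⁻¹ := by
  have h1 : (0:ℝ) < 1 + u ^ 2 := by positivity
  unfold Sfn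
  split
  · rw [show u = 0 by assumption]; norm_num
  · rename_i hu
    have hπ : (1:ℝ) ≤ π := by nlinarith [Real.pi_gt_three]
    have hu2 : (0:ℝ) < u ^ 2 := by positivity
    have hπu : (0:ℝ) < (π * u) ^ 2 := by
      have : π * u ≠ 0 := mul_ne_zero (by positivity) hu
      positivity
    rcases le_total (u ^ 2) 1 with h | h
    · have hsin : Real.sin (π * u) ^ 2 ≤ (π * u) ^ 2 := by
        have h0 := Real.abs_sin_le_abs (x := π * u)
        nlinarith [abs_nonneg (π * u), abs_nonneg (Real.sin (π * u)),
          sq_abs (Real.sin (π*u)), sq_abs (π*u)]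
      have h3 : Real.sin (π * u) ^ 2 / (π * u) ^ 2 ≤ 1 := by
        rw [div_le_one hπu]; exact hsin
      have h4 : (2:ℝ) * (1 + u ^ 2)⁻¹ = 2 / (1 + u ^ 2) := (div_eq_mul_inv 2 _).symm
      have h2 : (1:ℝ) ≤ 2 * (1 + u ^ 2)⁻¹ := by
        rw [h4, le_div_iff₀ h1]; linarith
      linarith
    · have hsin : Real.sin (π * u) ^ 2 ≤ 1 := by
        nlinarith [Real.neg_one_le_sin (π * u), Real.sin_le_one (π * u)]
      have hπ2 : (1:ℝ) ≤ π * π := by nlinarith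
      have h4 : (2:ℝ) * (1 + u ^ 2)⁻¹ = 2 / (1 + u ^ 2) := (div_eq_mul_inv 2 _).symm
      rw [h4, div_le_div_iff₀ hπu h1]
      nlinarith [mul_le_mul_of_nonneg_right hsin (by positivity : (0:ℝ) ≤ 1 + u ^ 2),
        mul_le_mul_of_nonneg_right hπ2 hu2.le]

lemma Sfn_measurable : Measurable Sfn := by
  unfold Sfn
  apply Measurable.ite (measurableSet_eq_fun measurable_id measurable_const) measurable_const
  exact ((Real.continuous_sin.comp (continuous_const.mul continuous_id)).pow 2).measurable.div
    (((continuous_const.mul continuous_id).pow 2).measurable)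

lemma Sc_integrable : Integrable Sc := by
  have hg : Integrable (fun u : ℝ => 2 * (1 + u ^ 2)⁻¹) := integrable_inv_one_add_sq.const_mul 2
  apply hg.mono' (Complex.measurable_ofReal.comp Sfn_measurable).aestronglyMeasurable
  filter_upwards with u
  simp only [Function.comp_apply, Complex.norm_real, Real.norm_eq_abs]
  rw [abs_of_nonneg (Sfn_nonneg u)]
  exact Sfn_le u

/-! ### 1-D convolution identity -/

lemma conv1 (a : ℝ) : ∫ t : ℝ, hfn t * hfn (a - t) = g1c a := by
  have h2 : ∀ t : ℝ, hfn (a - t) = Set.indicator (Set.Icc (a - 1/2) (a + 1/2)) 1 t := by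
    intro t; unfold hfn
    rw [Set.indicator_apply, Set.indicator_apply]
    refine if_congr ?_ rfl rfl
    simp only [Set.mem_Icc]
    constructor <;> rintro ⟨u1, u2⟩ <;> constructor <;> linarith
  have key : (fun t : ℝ => hfn t * hfn (a - t)) =
      Set.indicator (Set.Icc (max (-(1/2) : ℝ) (a - 1/2)) (min (1/2 : ℝ) (a + 1/2)))
        (fun _ => (1:ℂ)) := by
    funext t
    rw [h2 t]
    have := congrFun (Set.inter_indicator_one (M₀ := ℂ)
      (s := Set.Icc (-(1/2):ℝ) (1/2)) (t := Set.Icc (a - 1/2) (a + 1/2))) t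
    simp only [Pi.mul_apply] at this
    rw [show (hfn t) = (Set.Icc (-(1/2):ℝ) (1/2)).indicator 1 t from rfl, ← this,
      Set.Icc_inter_Icc]
    rfl
  have hmm : ((1:ℝ)/2 ⊓ (a + 1/2)) - (-(1/2) ⊔ (a - 1/2)) = 1 - |a| := by
    rcases le_total 0 a with ha | ha
    · rw [abs_of_nonneg ha, min_eq_left (by linarith), max_eq_right (by linarith)]; ring
    · rw [abs_of_nonpos ha, min_eq_right (by linarith), max_eq_left (by linarith)]; ring
  rw [key, integral_indicator_const (1:ℂ) measurableSet_Icc, Real.volume_real_Icc,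
    Complex.real_smul, mul_one]
  unfold g1c g1
  norm_cast
  rw [hmm]

/-! ### 1-D Fourier transform of the triangle function -/

lemma integral_restrict {E : Type*} [NormedAddCommGroup E] [NormedSpace ℝ E]
    (F : ℝ → E) (hF : ∀ t, t ∉ Set.Icc (-1 : ℝ) 1 → F t = 0) :
    ∫ t, F t = ∫ t in (-1 : ℝ)..1, F t := by
  have h1 : Set.indicator (Set.Icc (-1:ℝ) 1) F = F := by
    apply Set.indicator_eq_self.2
    intro x hx
    by_contra h
    exact hx (hF x h)
  conv_lhs => rw [← h1]
  rw [integral_indicator measurableSet_Icc, integral_Icc_eq_integral_Ioc,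
    ← intervalIntegral.integral_of_le (by norm_num : (-1:ℝ) ≤ 1)]

lemma key1 {c : ℂ} (hc : c ≠ 0) :
    ∫ v in (0:ℝ)..1, (1 - (v:ℂ)) * Complex.exp (c * v) = (Complex.exp c - 1 - c) / c ^ 2 := by
  have hderiv : ∀ v ∈ Set.uIcc (0:ℝ) 1, HasDerivAt
      (fun v : ℝ => ((1 - (v:ℂ)) / c + 1 / c ^ 2) * Complex.exp (c * v))
      ((1 - (v:ℂ)) * Complex.exp (c * v)) v := by
    intro v _
    have hre : HasDerivAt (fun v : ℝ => (v:ℂ)) 1 v := by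
      simpa using (hasDerivAt_id v).ofReal_comp
    have h1 : HasDerivAt (fun v : ℝ => (1 - (v:ℂ)) / c + 1 / c ^ 2) (-1 / c) v :=
      ((hre.const_sub 1).div_const c).add_const (1 / c ^ 2)
    have h2 : HasDerivAt (fun v : ℝ => Complex.exp (c * v)) (Complex.exp (c * v) * c) v := by
      simpa using (hre.const_mul c).cexp
    have h3 := h1.mul h2
    have heq : -1 / c * Complex.exp (c * ↑v) +
        ((1 - ↑v) / c + 1 / c ^ 2) * (Complex.exp (c * ↑v) * c) =
        (1 - (v:ℂ)) * Complex.exp (c * v) := by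
      field_simp
      ring
    rwa [heq] at h3
  have hint : IntervalIntegrable (fun v : ℝ => (1 - (v:ℂ)) * Complex.exp (c * v))
      volume 0 1 := by
    apply Continuous.intervalIntegrable
    exact (continuous_const.sub Complex.continuous_ofReal).mul
      ((continuous_const.mul Complex.continuous_ofReal).cexp)
  rw [intervalIntegral.integral_eq_sub_of_hasDerivAt hderiv hint]
  push_cast
  field_simp
  simp only [mul_zero, Complex.exp_zero]
  ring

lemma F_g1 (u : ℝ) : FourierTransform.fourier g1c u = Sc u := by
  by_cases hu : u = 0
  · subst hu
    rw [Real.fourier_real_eq_integral_exp_smul]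
    simp only [mul_zero, Complex.ofReal_zero, zero_mul, Complex.exp_zero, one_smul]
    rw [show ∫ v, g1c v = ((∫ v, g1 v : ℝ) : ℂ) from integral_ofReal]
    have hg1 : ∫ v, g1 v = 1 := by
      rw [integral_restrict g1 (fun t ht => by
        have := g1c_support t ht
        simpa [g1c, Complex.ofReal_eq_zero] using this)]
      rw [← intervalIntegral.integral_add_adjacent_intervals (a := (-1:ℝ)) (b := 0) (c := 1)
        (g1_continuous.intervalIntegrable _ _) (g1_continuous.intervalIntegrable _ _)]
      have e1 : ∫ v in (-1:ℝ)..0, g1 v = ∫ v in (-1:ℝ)..0, (1 + v) := by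
        apply intervalIntegral.integral_congr
        intro v hv
        rw [Set.uIcc_of_le (by norm_num : (-1:ℝ) ≤ 0), Set.mem_Icc] at hv
        unfold g1
        rw [abs_of_nonpos hv.2, max_eq_left (by linarith)]
        ring
      have e2 : ∫ v in (0:ℝ)..1, g1 v = ∫ v in (0:ℝ)..1, (1 - v) := by
        apply intervalIntegral.integral_congr
        intro v hv
        rw [Set.uIcc_of_le (by norm_num : (0:ℝ) ≤ 1), Set.mem_Icc] at hv
        unfold g1
        rw [abs_of_nonneg hv.1, max_eq_left (by linarith)]
      rw [e1, e2,
        intervalIntegral.integral_add intervalIntegrable_const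
          intervalIntegral.intervalIntegrable_id,
        intervalIntegral.integral_sub intervalIntegrable_const
          intervalIntegral.intervalIntegrable_id,
        intervalIntegral.integral_const, integral_id,
        intervalIntegral.integral_const, integral_id]
      norm_num
    rw [hg1]
    simp [Sc, Sfn]
  · rw [Real.fourier_real_eq_integral_exp_smul]
    have hπ : π ≠ 0 := Real.pi_ne_zero
    set c : ℂ := (-(2*π*u) : ℝ) * Complex.I with hc_def
    have hc : c ≠ 0 := by
      rw [hc_def]
      apply mul_ne_zero _ Complex.I_ne_zero
      rw [ne_eq, Complex.ofReal_eq_zero, neg_eq_zero]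
      intro h
      rcases mul_eq_zero.1 h with h' | h'
      · rcases mul_eq_zero.1 h' with h'' | h''
        · norm_num at h''
        · exact hπ h''
      · exact hu h'
    have hint : ∫ v, Complex.exp (↑(-2 * π * v * u) * Complex.I) • g1c v
        = ∫ v in (-1:ℝ)..1, g1c v * Complex.exp (c * v) := by
      rw [show (fun v : ℝ => Complex.exp (↑(-2 * π * v * u) * Complex.I) • g1c v)
          = fun v : ℝ => g1c v * Complex.exp (c * v) by
        funext v
        rw [smul_eq_mul, mul_comm]
        congr 2
        push_cast [hc_def]
        ring]
      exact integral_restrict _ (fun t ht => by rw [g1c_support t ht, zero_mul])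
    rw [hint]
    have cont1 : ∀ d : ℂ, Continuous fun v : ℝ => g1c v * Complex.exp (d * v) := fun d =>
      g1c_continuous.mul ((continuous_const.mul Complex.continuous_ofReal).cexp)
    rw [← intervalIntegral.integral_add_adjacent_intervals (a := (-1:ℝ)) (b := 0) (c := 1)
      ((cont1 c).intervalIntegrable _ _) ((cont1 c).intervalIntegrable _ _)]
    have e2 : ∫ v in (0:ℝ)..1, g1c v * Complex.exp (c * v)
        = (Complex.exp c - 1 - c) / c ^ 2 := by
      rw [← key1 hc]
      apply intervalIntegral.integral_congr
      intro v hv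
      rw [Set.uIcc_of_le (by norm_num : (0:ℝ) ≤ 1), Set.mem_Icc] at hv
      dsimp only
      unfold g1c g1
      rw [abs_of_nonneg hv.1, max_eq_left (by linarith)]
      push_cast
      ring
    have e1 : ∫ v in (-1:ℝ)..0, g1c v * Complex.exp (c * v)
        = (Complex.exp (-c) - 1 + c) / c ^ 2 := by
      have hcomp : ∫ x in (-1:ℝ)..0, (fun y : ℝ => g1c (-y) * Complex.exp (-c * y)) (-x)
          = ∫ y in (0:ℝ)..1, g1c (-y) * Complex.exp (-c * y) := by
        rw [intervalIntegral.integral_comp_neg (fun y : ℝ => g1c (-y) * Complex.exp (-c * y))]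
        norm_num
      calc ∫ v in (-1:ℝ)..0, g1c v * Complex.exp (c * v)
          = ∫ x in (-1:ℝ)..0, (fun y : ℝ => g1c (-y) * Complex.exp (-c * y)) (-x) := by
            apply intervalIntegral.integral_congr
            intro v hv
            dsimp only
            rw [neg_neg]
            congr 1
            push_cast
            ring
        _ = ∫ y in (0:ℝ)..1, g1c (-y) * Complex.exp (-c * y) := hcomp
        _ = (Complex.exp (-c) - 1 - (-c)) / (-c) ^ 2 := by
            rw [← key1 (neg_ne_zero.2 hc)]
            apply intervalIntegral.integral_congr
            intro v hv
            rw [Set.uIcc_of_le (by norm_num : (0:ℝ) ≤ 1), Set.mem_Icc] at hv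
            dsimp only
            unfold g1c g1
            rw [abs_neg, abs_of_nonneg hv.1, max_eq_left (by linarith)]
            push_cast
            ring
        _ = (Complex.exp (-c) - 1 + c) / c ^ 2 := by ring
    rw [e1, e2]
    have hsum : (Complex.exp (-c) - 1 + c) / c ^ 2 + (Complex.exp c - 1 - c) / c ^ 2
        = (Complex.exp c + Complex.exp (-c) - 2) / c ^ 2 := by ring
    rw [hsum]
    have hec : Complex.exp c + Complex.exp (-c) = ((Real.cos (2*π*u) : ℝ) : ℂ) * 2 := by
      rw [hc_def, show -((((-(2*π*u) : ℝ)) : ℂ) * Complex.I) = ((2*π*u : ℝ) : ℂ) * Complex.I by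
        push_cast; ring]
      rw [Complex.exp_mul_I, Complex.exp_mul_I]
      rw [show ((-(2*π*u) : ℝ) : ℂ) = -((2*π*u : ℝ) : ℂ) by push_cast; ring]
      rw [Complex.cos_neg, Complex.sin_neg, ← Complex.ofReal_cos]
      ring
    rw [hec]
    have hc2 : c ^ 2 = -(((2*π*u)^2 : ℝ) : ℂ) := by
      rw [hc_def, mul_pow, Complex.I_sq]
      push_cast
      ring
    rw [hc2]
    have hreal : Real.cos (2*π*u) * 2 - 2 = -4 * Real.sin (π*u) ^ 2 := by
      rw [show 2*π*u = 2*(π*u) by ring, Real.cos_two_mul, Real.cos_sq']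
      ring
    have hπu : (π*u) ≠ 0 := mul_ne_zero hπ hu
    unfold Sc Sfn
    rw [if_neg hu]
    rw [show (((Real.cos (2*π*u) : ℝ) : ℂ) * 2 - 2 : ℂ)
        = ((Real.cos (2*π*u) * 2 - 2 : ℝ) : ℂ) by push_cast; ring]
    rw [hreal]
    rw [show (-(((2*π*u)^2 : ℝ) : ℂ)) = ((-((2*π*u)^2) : ℝ) : ℂ) by push_cast; ring]
    rw [← Complex.ofReal_div]
    congr 1
    have h2πu : (2*π*u) ≠ 0 := mul_ne_zero (mul_ne_zero two_ne_zero hπ) hu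
    rw [div_eq_div_iff (neg_ne_zero.2 (pow_ne_zero 2 h2πu)) (pow_ne_zero 2 hπu)]
    ring

/-! ### 2-D rotation machinery -/

abbrev E2 := EuclideanSpace ℝ (Fin 2)

def rotFun (w : E2) : E2 := !₂[(w 0 + w 1) / Real.sqrt 2, (w 0 - w 1) / Real.sqrt 2]

lemma sqrt2_pos : (0:ℝ) < Real.sqrt 2 := by positivity

lemma sqrt2_sq : Real.sqrt 2 * Real.sqrt 2 = 2 := Real.mul_self_sqrt (by norm_num)

lemma inv_sqrt2 : (1:ℝ) / Real.sqrt 2 = Real.sqrt 2 / 2 := by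
  rw [div_eq_div_iff (ne_of_gt sqrt2_pos) (by norm_num : (2:ℝ) ≠ 0), sqrt2_sq]
  norm_num

lemma rotFun_apply0 (w : E2) : rotFun w 0 = (w 0 + w 1) / Real.sqrt 2 := rfl
lemma rotFun_apply1 (w : E2) : rotFun w 1 = (w 0 - w 1) / Real.sqrt 2 := rfl

lemma rotFun_invol (w : E2) : rotFun (rotFun w) = w := by
  ext i
  fin_cases i
  · show rotFun (rotFun w) 0 = w 0
    rw [rotFun_apply0, rotFun_apply0, rotFun_apply1, ← add_div, div_div, sqrt2_sq]
    ring
  · show rotFun (rotFun w) 1 = w 1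
    rw [rotFun_apply1, rotFun_apply0, rotFun_apply1, ← sub_div, div_div, sqrt2_sq]
    ring

def rotIso : E2 ≃ₗᵢ[ℝ] E2 where
  toFun := rotFun
  invFun := rotFun
  left_inv := rotFun_invol
  right_inv := rotFun_invol
  map_add' := by
    intro w x
    ext i
    fin_cases i
    · show rotFun (w + x) 0 = rotFun w 0 + rotFun x 0
      rw [rotFun_apply0, rotFun_apply0, rotFun_apply0]
      simp only [PiLp.add_apply]
      ring
    · show rotFun (w + x) 1 = rotFun w 1 + rotFun x 1
      rw [rotFun_apply1, rotFun_apply1, rotFun_apply1]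
      simp only [PiLp.add_apply]
      ring
  map_smul' := by
    intro r w
    ext i
    fin_cases i
    · show rotFun (r • w) 0 = r * rotFun w 0
      rw [rotFun_apply0, rotFun_apply0]
      simp only [PiLp.smul_apply, smul_eq_mul]
      ring
    · show rotFun (r • w) 1 = r * rotFun w 1
      rw [rotFun_apply1, rotFun_apply1]
      simp only [PiLp.smul_apply, smul_eq_mul]
      ring
  norm_map' := by
    intro w
    have h0 : ‖(rotFun w) 0‖^2 + ‖(rotFun w) 1‖^2 = ‖w 0‖^2 + ‖w 1‖^2 := by
      rw [rotFun_apply0, rotFun_apply1]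
      simp only [Real.norm_eq_abs, sq_abs]
      rw [div_pow, div_pow, sq (Real.sqrt 2), sqrt2_sq]
      field_simp
      ring
    rw [EuclideanSpace.norm_eq, EuclideanSpace.norm_eq, Fin.sum_univ_two, Fin.sum_univ_two]
    exact congrArg Real.sqrt h0

def rotEquiv : E2 ≃ᵐ ℝ × ℝ :=
  (rotIso.toHomeomorph.toMeasurableEquiv).trans
    ((MeasurableEquiv.toLp 2 (Fin 2 → ℝ)).symm.trans (MeasurableEquiv.piFinTwo fun _ => ℝ))

lemma rotEquiv_apply (w : E2) :
    rotEquiv w = ((w 0 + w 1) / Real.sqrt 2, (w 0 - w 1) / Real.sqrt 2) := rfl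

lemma rotEquiv_measurePreserving : MeasurePreserving rotEquiv volume volume := by
  have h1 : MeasurePreserving rotIso volume volume := rotIso.measurePreserving
  have h2 := EuclideanSpace.volume_preserving_symm_measurableEquiv_toLp (Fin 2)
  have h3 := MeasureTheory.volume_preserving_piFinTwo fun _ : Fin 2 => ℝ
  exact (h3.comp h2).comp h1

lemma factor (φ ψ : ℝ → ℂ) :
    ∫ w : E2, φ ((w 0 + w 1) / Real.sqrt 2) * ψ ((w 0 - w 1) / Real.sqrt 2)
      = (∫ x, φ x) * ∫ x, ψ x := by
  have key := rotEquiv_measurePreserving.integral_comp rotEquiv.measurableEmbedding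
    (fun z : ℝ × ℝ => φ z.1 * ψ z.2)
  calc ∫ w : E2, φ ((w 0 + w 1) / Real.sqrt 2) * ψ ((w 0 - w 1) / Real.sqrt 2)
      = ∫ w : E2, (fun z : ℝ × ℝ => φ z.1 * ψ z.2) (rotEquiv w) := rfl
    _ = ∫ z : ℝ × ℝ, φ z.1 * ψ z.2 := key
    _ = (∫ x, φ x) * ∫ x, ψ x := by
        rw [MeasureTheory.Measure.volume_eq_prod, MeasureTheory.integral_prod_mul]

lemma factor_integrable {φ ψ : ℝ → ℂ} (hφ : Integrable φ) (hψ : Integrable ψ) :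
    Integrable (fun w : E2 => φ ((w 0 + w 1) / Real.sqrt 2) * ψ ((w 0 - w 1) / Real.sqrt 2)) := by
  have h := (rotEquiv_measurePreserving.integrable_comp_emb rotEquiv.measurableEmbedding
    (g := fun z : ℝ × ℝ => φ z.1 * ψ z.2)).2 ?_
  · exact h
  · rw [MeasureTheory.Measure.volume_eq_prod]
    exact hφ.mul_prod hψ

/-! ### identification of `chiR`, `gfun`, and its Fourier transform -/

lemma maxabs (a b : ℝ) : |a| + |b| ≤ max |a + b| |a - b| := by
  rcases le_total 0 a with ha | ha <;> rcases le_total 0 b with hb | hb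
  · calc |a| + |b| = |a + b| := by
          rw [abs_of_nonneg ha, abs_of_nonneg hb, abs_of_nonneg (by linarith)]
      _ ≤ _ := le_max_left _ _
  · calc |a| + |b| = |a - b| := by
          rw [abs_of_nonneg ha, abs_of_nonpos hb, abs_of_nonneg (by linarith)]; ring
      _ ≤ _ := le_max_right _ _
  · calc |a| + |b| = |a - b| := by
          rw [abs_of_nonpos ha, abs_of_nonneg hb, abs_of_nonpos (by linarith)]; ring
      _ ≤ _ := le_max_right _ _
  · calc |a| + |b| = |a + b| := by
          rw [abs_of_nonpos ha, abs_of_nonpos hb, abs_of_nonpos (by linarith)]; ring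
      _ ≤ _ := le_max_left _ _

lemma chiR_eq (t : E2) :
    chiR t = hfn ((t 0 + t 1) / Real.sqrt 2) * hfn ((t 0 - t 1) / Real.sqrt 2) := by
  by_cases hm : t ∈ Rsq
  · have hm' : |t 0| + |t 1| ≤ Real.sqrt 2 / 2 := by
      have : |t 0| + |t 1| ≤ 1 / Real.sqrt 2 := hm
      rwa [inv_sqrt2] at this
    have hmem : ∀ x : ℝ, |x| ≤ Real.sqrt 2 / 2 → x / Real.sqrt 2 ∈ Set.Icc (-(1/2):ℝ) (1/2) := by
      intro x hx
      have h1 : |x / Real.sqrt 2| ≤ 1/2 := by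
        rw [abs_div, abs_of_pos sqrt2_pos, div_le_iff₀ sqrt2_pos]
        nlinarith [sqrt2_sq]
      rw [Set.mem_Icc]
      constructor
      · linarith [(abs_le.1 h1).1]
      · exact (abs_le.1 h1).2
    rw [chiR, Set.indicator_of_mem hm]
    have h01 := hmem (t 0 + t 1) (le_trans (abs_add_le _ _) hm')
    have h02 := hmem (t 0 - t 1) (le_trans (abs_sub _ _) hm')
    unfold hfn
    rw [Set.indicator_of_mem h01, Set.indicator_of_mem h02]
    norm_num
  · rw [chiR, Set.indicator_of_notMem hm]
    have hm' : Real.sqrt 2 / 2 < |t 0| + |t 1| := by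
      have : ¬(|t 0| + |t 1| ≤ 1 / Real.sqrt 2) := hm
      rw [inv_sqrt2] at this
      linarith [not_le.1 this]
    have hmax : Real.sqrt 2 / 2 < max |t 0 + t 1| |t 0 - t 1| :=
      lt_of_lt_of_le hm' (maxabs _ _)
    have hnot : ∀ x : ℝ, Real.sqrt 2 / 2 < |x| →
        x / Real.sqrt 2 ∉ Set.Icc (-(1/2):ℝ) (1/2) := by
      intro x hx hmem
      rw [Set.mem_Icc] at hmem
      have h1 : |x / Real.sqrt 2| ≤ 1/2 := abs_le.2 ⟨by linarith [hmem.1], hmem.2⟩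
      rw [abs_div, abs_of_pos sqrt2_pos, div_le_iff₀ sqrt2_pos] at h1
      nlinarith [sqrt2_sq]
    rcases lt_max_iff.1 hmax with h | h
    · unfold hfn
      rw [Set.indicator_of_notMem (hnot _ h), zero_mul]
    · unfold hfn
      rw [Set.indicator_of_notMem (hnot _ h), mul_zero]

lemma gfun_eq (w : E2) :
    gfun w = g1c ((w 0 + w 1) / Real.sqrt 2) * g1c ((w 0 - w 1) / Real.sqrt 2) := by
  unfold gfun
  have hre : (fun t : E2 => chiR t * chiR (w - t)) = fun t : E2 =>
      (fun x => hfn x * hfn ((w 0 + w 1) / Real.sqrt 2 - x)) ((t 0 + t 1) / Real.sqrt 2) *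
      (fun x => hfn x * hfn ((w 0 - w 1) / Real.sqrt 2 - x)) ((t 0 - t 1) / Real.sqrt 2) := by
    funext t
    rw [chiR_eq t, chiR_eq (w - t)]
    rw [show ((w - t) 0 + (w - t) 1) / Real.sqrt 2
        = (w 0 + w 1) / Real.sqrt 2 - (t 0 + t 1) / Real.sqrt 2 by
      simp only [PiLp.sub_apply]; ring,
      show ((w - t) 0 - (w - t) 1) / Real.sqrt 2
        = (w 0 - w 1) / Real.sqrt 2 - (t 0 - t 1) / Real.sqrt 2 by
      simp only [PiLp.sub_apply]; ring]
    dsimp only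
    ring
  rw [hre, factor (fun x => hfn x * hfn ((w 0 + w 1) / Real.sqrt 2 - x))
    (fun x => hfn x * hfn ((w 0 - w 1) / Real.sqrt 2 - x)), conv1, conv1]

lemma fourier_factor (φ : ℝ → ℂ) :
    FourierTransform.fourier
        (fun w : E2 => φ ((w 0 + w 1) / Real.sqrt 2) * φ ((w 0 - w 1) / Real.sqrt 2))
      = fun ξ : E2 => FourierTransform.fourier φ ((ξ 0 + ξ 1) / Real.sqrt 2) *
          FourierTransform.fourier φ ((ξ 0 - ξ 1) / Real.sqrt 2) := by
  funext ξ
  rw [Real.fourier_eq']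
  have hinner : ∀ w : E2, (inner ℝ w ξ : ℝ) =
      ((w 0 + w 1) / Real.sqrt 2) * ((ξ 0 + ξ 1) / Real.sqrt 2) +
      ((w 0 - w 1) / Real.sqrt 2) * ((ξ 0 - ξ 1) / Real.sqrt 2) := by
    intro w
    rw [PiLp.inner_apply, Fin.sum_univ_two]
    simp only [RCLike.inner_apply, starRingEnd_apply, star_trivial]
    rw [div_mul_div_comm, div_mul_div_comm, ← add_div, sqrt2_sq,
      eq_div_iff (by norm_num : (2:ℝ) ≠ 0)]
    ring
  have hsplit : (fun w : E2 => Complex.exp (↑(-2 * π * (inner ℝ w ξ : ℝ)) * Complex.I) •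
      (φ ((w 0 + w 1) / Real.sqrt 2) * φ ((w 0 - w 1) / Real.sqrt 2)))
      = fun w : E2 =>
        (fun x => Complex.exp (↑(-2 * π * x * ((ξ 0 + ξ 1) / Real.sqrt 2)) * Complex.I) * φ x)
          ((w 0 + w 1) / Real.sqrt 2) *
        (fun x => Complex.exp (↑(-2 * π * x * ((ξ 0 - ξ 1) / Real.sqrt 2)) * Complex.I) * φ x)
          ((w 0 - w 1) / Real.sqrt 2) := by
    funext w
    dsimp only
    rw [smul_eq_mul, hinner w]
    rw [show (↑(-2 * π * ((w 0 + w 1) / Real.sqrt 2 * ((ξ 0 + ξ 1) / Real.sqrt 2) +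
          (w 0 - w 1) / Real.sqrt 2 * ((ξ 0 - ξ 1) / Real.sqrt 2))) * Complex.I : ℂ)
        = ↑(-2 * π * ((w 0 + w 1) / Real.sqrt 2) * ((ξ 0 + ξ 1) / Real.sqrt 2)) * Complex.I +
          ↑(-2 * π * ((w 0 - w 1) / Real.sqrt 2) * ((ξ 0 - ξ 1) / Real.sqrt 2)) * Complex.I by
      push_cast; ring]
    rw [Complex.exp_add]
    ring
  rw [hsplit, factor
    (fun x => Complex.exp (↑(-2 * π * x * ((ξ 0 + ξ 1) / Real.sqrt 2)) * Complex.I) * φ x)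
    (fun x => Complex.exp (↑(-2 * π * x * ((ξ 0 - ξ 1) / Real.sqrt 2)) * Complex.I) * φ x)]
  rw [Real.fourier_real_eq_integral_exp_smul, Real.fourier_real_eq_integral_exp_smul]
  simp_rw [smul_eq_mul]

lemma gfun_fun_eq : gfun = fun w : E2 =>
    g1c ((w 0 + w 1) / Real.sqrt 2) * g1c ((w 0 - w 1) / Real.sqrt 2) := funext gfun_eq

lemma fourier_gfun : FourierTransform.fourier gfun
    = fun ξ : E2 => Sc ((ξ 0 + ξ 1) / Real.sqrt 2) * Sc ((ξ 0 - ξ 1) / Real.sqrt 2) := by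
  rw [gfun_fun_eq, fourier_factor g1c]
  funext ξ
  rw [F_g1, F_g1]

lemma fourier_Sc (u : ℝ) : FourierTransform.fourier Sc u = g1c u := by
  have h1 : FourierTransform.fourier g1c = Sc := funext F_g1
  have hinv : FourierTransformInv.fourierInv (FourierTransform.fourier g1c) = g1c :=
    g1c_continuous.fourierInv_fourier_eq g1c_integrable (h1 ▸ Sc_integrable)
  calc FourierTransform.fourier Sc u = FourierTransform.fourier (FourierTransform.fourier g1c) u := by
        rw [h1]
    _ = FourierTransformInv.fourierInv (FourierTransform.fourier g1c) (-u) := by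
        rw [Real.fourierInv_eq_fourier_neg, neg_neg]
    _ = g1c (-u) := by rw [hinv]
    _ = g1c u := by unfold g1c; rw [g1_even]

lemma fourier_fourier_gfun :
    FourierTransform.fourier (FourierTransform.fourier gfun) = gfun := by
  rw [fourier_gfun, fourier_factor Sc]
  funext η
  rw [fourier_Sc, fourier_Sc, ← gfun_eq]

lemma gfun_integrable : Integrable gfun := by
  rw [gfun_fun_eq]
  exact factor_integrable g1c_integrable g1c_integrable

lemma Fgfun_integrable : Integrable (FourierTransform.fourier gfun) := by
  rw [fourier_gfun]
  exact factor_integrable Sc_integrable Sc_integrable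

end Stmt11Aux
end Stmt11AuxSection

open Stmt11Aux in
theorem stmt11 :
    (FourierTransform.fourier ffun = fun w => -ffun w) ∧
      ffun 0 = 0 ∧
      (∀ p : EuclideanSpace ℝ (Fin 2), 1 ≤ (p 0) ^ 2 + (p 1) ^ 2 →
        (∃ k : ℤ, (p 0) ^ 2 - (p 1) ^ 2 = 2 * k) →
        (ffun p).im = 0 ∧ 0 ≤ (ffun p).re) := by
  have hL : Continuous fun p : E2 × E2 => (innerₗ E2) p.1 p.2 := continuous_inner
  refine ⟨?_, ?_, ?_⟩
  · -- (i) 𝓕 f = -f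
    funext w
    have hsplit : (fun v : E2 => 𝐞 (-⟪v, w⟫) • ffun v)
        = fun v : E2 => (𝐞 (-⟪v, w⟫) • FourierTransform.fourier gfun v
          - 𝐞 (-⟪v, w⟫) • gfun v) := by
      funext v
      simp [ffun, smul_sub]
    have h1 : Integrable (fun v : E2 => 𝐞 (-(innerₗ E2 v) w) • FourierTransform.fourier gfun v) :=
      (VectorFourier.fourierIntegral_convergent_iff Real.continuous_fourierChar hL w).2
        Fgfun_integrable
    have h2 : Integrable (fun v : E2 => 𝐞 (-(innerₗ E2 v) w) • gfun v) :=
      (VectorFourier.fourierIntegral_convergent_iff Real.continuous_fourierChar hL w).2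
        gfun_integrable
    calc FourierTransform.fourier ffun w
        = ∫ v : E2, 𝐞 (-⟪v, w⟫) • ffun v := Real.fourier_eq ffun w
      _ = (∫ v : E2, 𝐞 (-⟪v, w⟫) • FourierTransform.fourier gfun v)
          - ∫ v : E2, 𝐞 (-⟪v, w⟫) • gfun v := by
          have h1' : Integrable (fun v : E2 => 𝐞 (-⟪v, w⟫) • FourierTransform.fourier gfun v) := h1
          have h2' : Integrable (fun v : E2 => 𝐞 (-⟪v, w⟫) • gfun v) := h2
          rw [hsplit, integral_sub h1' h2']
      _ = FourierTransform.fourier (FourierTransform.fourier gfun) w - FourierTransform.fourier gfun w := rfl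
      _ = gfun w - FourierTransform.fourier gfun w := by rw [fourier_fourier_gfun]
      _ = -ffun w := by rw [ffun]; ring
  · -- (ii) f(0) = 0
    have h0 : ((0 : E2) 0 + (0 : E2) 1) / Real.sqrt 2 = 0 := by
      simp
    have h0' : ((0 : E2) 0 - (0 : E2) 1) / Real.sqrt 2 = 0 := by
      simp
    rw [ffun, congrFun fourier_gfun 0, gfun_eq 0, h0, h0']
    unfold Sc g1c
    rw [Sfn_zero, g1_zero]
    norm_num
  · -- (iii)
    intro p hp ⟨k, hk⟩
    set a : ℝ := (p 0 + p 1) / Real.sqrt 2 with ha_def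
    set b : ℝ := (p 0 - p 1) / Real.sqrt 2 with hb_def
    have hab : a * b = (k : ℝ) := by
      rw [ha_def, hb_def, div_mul_div_comm, sqrt2_sq]
      rw [show (p 0 + p 1) * (p 0 - p 1) = (p 0)^2 - (p 1)^2 by ring, hk]
      ring
    have hsum : a^2 + b^2 = (p 0)^2 + (p 1)^2 := by
      rw [ha_def, hb_def, div_pow, div_pow, sq (Real.sqrt 2), sqrt2_sq]
      field_simp
      ring
    have hzero : g1 a * g1 b = 0 := by
      by_cases hA : 1 ≤ |a|
      · rw [g1_eq_zero hA, zero_mul]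
      by_cases hB : 1 ≤ |b|
      · rw [g1_eq_zero hB, mul_zero]
      push_neg at hA hB
      exfalso
      have hk0 : k = 0 := by
        have habs : |(k:ℝ)| < 1 := by
          rw [← hab, abs_mul]
          calc |a| * |b| ≤ |a| * 1 := by
                apply mul_le_mul_of_nonneg_left hB.le (abs_nonneg a)
            _ = |a| := mul_one _
            _ < 1 := hA
        by_contra hk0
        have : (1:ℝ) ≤ |(k:ℝ)| := by
          rw [show |(k:ℝ)| = ((|k| : ℤ) : ℝ) by push_cast; rfl]
          exact_mod_cast Int.one_le_abs hk0
        linarith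
      have hab0 : a * b = 0 := by rw [hab, hk0]; norm_num
      rcases mul_eq_zero.1 hab0 with h | h
      · rw [h] at hsum
        have : 1 ≤ b^2 := by rw [← hsum] at hp; linarith [hp]
        nlinarith [sq_abs b, abs_nonneg b]
      · rw [h] at hsum
        have : 1 ≤ a^2 := by rw [← hsum] at hp; linarith [hp]
        nlinarith [sq_abs a, abs_nonneg a]
    have hval : ffun p = ((Sfn a * Sfn b : ℝ) : ℂ) := by
      rw [ffun, congrFun fourier_gfun p, gfun_eq p, ← ha_def, ← hb_def]
      unfold Sc g1c
      rw [show ((g1 a : ℂ) * (g1 b : ℂ)) = ((g1 a * g1 b : ℝ) : ℂ) by push_cast; ring, hzero]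
      push_cast
      ring
    rw [hval]
    constructor
    · exact Complex.ofReal_im _
    · rw [Complex.ofReal_re]
      exact mul_nonneg (Sfn_nonneg a) (Sfn_nonneg b)
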